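/- Let |ρ| < 1 and let s : ℝ → ℝ be measurable with (1-ρ²)s(x)² < 1 for all x and ∫ s(x) φ(x) dx = S (with Z ~ N(0,1), E[s(Z)] = S). Define h(x) = s(x) / √(1 - (1-ρ²)s(x)²). Then h(x)/√(1 + (1-ρ²)h(x)²) = s(x) for all x, and consequently, for (X,Y) with density 2 φ_2(x,y; ρ) Φ((y-ρx)h(x)), E[Y] = √(2/π)(1-ρ²) S. -/

import Mathlib

open MeasureTheory Real Set Filter
-- assume s1 lemmas present (concatenated later)

noncomputable def stdNormalPDF (x : ℝ) : ℝ :=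
  (Real.sqrt (2 * Real.pi))⁻¹ * Real.exp (-x ^ 2 / 2)

noncomputable def stdNormalCDF (t : ℝ) : ℝ :=
  ∫ u in Set.Iic t, stdNormalPDF u

lemma pdf_pos (x : ℝ) : 0 < stdNormalPDF x := by
  unfold stdNormalPDF; positivity

lemma pdf_eq : stdNormalPDF = fun x => (Real.sqrt (2 * Real.pi))⁻¹ * Real.exp (-(1/2) * x ^ 2) := by
  funext x; unfold stdNormalPDF; ring_nf

lemma pdf_continuous : Continuous stdNormalPDF := by
  unfold stdNormalPDF; continuity

lemma pdf_integrable : Integrable stdNormalPDF := by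
  rw [pdf_eq]
  exact (integrable_exp_neg_mul_sq (by norm_num)).const_mul _

lemma pdf_integral : ∫ x, stdNormalPDF x = 1 := by
  rw [pdf_eq]
  rw [integral_const_mul, integral_gaussian]
  rw [show Real.pi / (1/2) = 2 * Real.pi by ring]
  exact inv_mul_cancel₀ (by positivity)

lemma pdf_tendsto_top : Tendsto stdNormalPDF atTop (nhds 0) := by
  have h : Tendsto (fun x : ℝ => -x ^ 2 / 2) atTop atBot := by
    apply Tendsto.atBot_div_const (by norm_num)
    exact tendsto_neg_atBot_iff.mpr (tendsto_pow_atTop (by norm_num))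
  have := (Real.tendsto_exp_atBot.comp h).const_mul ((Real.sqrt (2 * Real.pi))⁻¹)
  rw [mul_zero] at this
  exact this.congr (fun x => rfl)

lemma pdf_tendsto_bot : Tendsto stdNormalPDF atBot (nhds 0) := by
  have h0 : Tendsto (fun x : ℝ => x ^ 2) atBot atTop := by
    have := (tendsto_pow_atTop (n := 2) (by norm_num : 2 ≠ 0)).comp
      (tendsto_neg_atBot_atTop : Tendsto (fun x : ℝ => -x) atBot atTop)
    apply this.congr
    intro x; simp [Function.comp, neg_pow]
  have h : Tendsto (fun x : ℝ => -x ^ 2 / 2) atBot atBot :=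
    Tendsto.atBot_div_const (by norm_num) (tendsto_neg_atBot_iff.mpr h0)
  have := (Real.tendsto_exp_atBot.comp h).const_mul ((Real.sqrt (2 * Real.pi))⁻¹)
  rw [mul_zero] at this
  exact this.congr (fun x => rfl)

lemma cdf_sub (t : ℝ) : stdNormalCDF t - stdNormalCDF 0 = ∫ u in (0:ℝ)..t, stdNormalPDF u :=
  intervalIntegral.integral_Iic_sub_Iic pdf_integrable.integrableOn pdf_integrable.integrableOn

lemma cdf_hasDeriv (t : ℝ) : HasDerivAt stdNormalCDF (stdNormalPDF t) t := by
  have h : ∀ u, stdNormalCDF u = stdNormalCDF 0 + ∫ x in (0:ℝ)..u, stdNormalPDF x := by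
    intro u; rw [← cdf_sub]; ring
  have H : HasDerivAt (fun u => stdNormalCDF 0 + ∫ x in (0:ℝ)..u, stdNormalPDF x)
      (stdNormalPDF t) t := by
    apply HasDerivAt.const_add
    exact intervalIntegral.integral_hasDerivAt_right
      (pdf_integrable.intervalIntegrable)
      (pdf_continuous.stronglyMeasurable.stronglyMeasurableAtFilter)
      pdf_continuous.continuousAt
  exact H.congr_of_eventuallyEq (Eventually.of_forall h)

lemma cdf_continuous : Continuous stdNormalCDF :=
  continuous_iff_continuousAt.mpr fun t => (cdf_hasDeriv t).continuousAt

lemma cdf_nonneg (t : ℝ) : 0 ≤ stdNormalCDF t :=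
  setIntegral_nonneg measurableSet_Iic (fun x _ => (pdf_pos x).le)

lemma cdf_le_one (t : ℝ) : stdNormalCDF t ≤ 1 := by
  rw [← pdf_integral]
  exact setIntegral_le_integral pdf_integrable (Eventually.of_forall fun x => (pdf_pos x).le)

lemma cdf_tendsto_top : Tendsto stdNormalCDF atTop (nhds 1) := by
  have h1 : Tendsto (fun t : ℝ => ∫ x in (0:ℝ)..t, stdNormalPDF x) atTop
      (nhds (∫ x in Ioi (0:ℝ), stdNormalPDF x)) :=
    intervalIntegral_tendsto_integral_Ioi 0 pdf_integrable.integrableOn tendsto_id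
  have h2 : stdNormalCDF 0 + ∫ x in Ioi (0:ℝ), stdNormalPDF x = 1 := by
    rw [← pdf_integral]
    unfold stdNormalCDF
    rw [← setIntegral_union (Iic_disjoint_Ioi le_rfl) measurableSet_Ioi
      pdf_integrable.integrableOn pdf_integrable.integrableOn, Iic_union_Ioi,
      setIntegral_univ]
  have h3 := h1.const_add (stdNormalCDF 0)
  rw [h2] at h3
  apply h3.congr
  intro t; rw [← cdf_sub]; ring

lemma cdf_tendsto_bot : Tendsto stdNormalCDF atBot (nhds 0) := by
  have h1 : Tendsto (fun t : ℝ => ∫ x in t..(0:ℝ), stdNormalPDF x) atBot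
      (nhds (∫ x in Iic (0:ℝ), stdNormalPDF x)) :=
    intervalIntegral_tendsto_integral_Iic 0 pdf_integrable.integrableOn tendsto_id
  have h3 : Tendsto (fun t : ℝ => stdNormalCDF 0 - ∫ x in t..(0:ℝ), stdNormalPDF x) atBot
      (nhds (stdNormalCDF 0 - ∫ x in Iic (0:ℝ), stdNormalPDF x)) := h1.const_sub _
  rw [show stdNormalCDF 0 - ∫ x in Iic (0:ℝ), stdNormalPDF x = 0 by
    unfold stdNormalCDF; ring] at h3
  apply h3.congr
  intro t
  have := cdf_sub t
  rw [intervalIntegral.integral_symm] at this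
  linarith

lemma pdf_even (x : ℝ) : stdNormalPDF (-x) = stdNormalPDF x := by
  unfold stdNormalPDF; rw [neg_pow]; ring_nf

lemma cdf_neg (t : ℝ) : stdNormalCDF (-t) = 1 - stdNormalCDF t := by
  have h1 : stdNormalCDF (-t) = ∫ x in Ioi t, stdNormalPDF x := by
    unfold stdNormalCDF
    rw [← neg_neg t, ← integral_comp_neg_Iic (-t) stdNormalPDF, neg_neg]
    exact setIntegral_congr_fun measurableSet_Iic fun x _ => (pdf_even x).symm ▸ rfl
  have h2 : stdNormalCDF t + ∫ x in Ioi t, stdNormalPDF x = 1 := by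
    rw [← pdf_integral]
    unfold stdNormalCDF
    rw [← setIntegral_union (Iic_disjoint_Ioi le_rfl) measurableSet_Ioi
      pdf_integrable.integrableOn pdf_integrable.integrableOn, Iic_union_Ioi,
      setIntegral_univ]
  rw [h1]; linarith

lemma abs_mul_pdf_integrable : Integrable (fun u : ℝ => |u| * stdNormalPDF u) := by
  have h : Integrable (fun u : ℝ => u * Real.exp (-(1/2) * u^2)) :=
    integrable_mul_exp_neg_mul_sq (by norm_num)
  apply (h.abs.const_mul ((Real.sqrt (2 * Real.pi))⁻¹)).congr
  filter_upwards with u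
  rw [abs_mul, pdf_eq, abs_of_nonneg (Real.exp_pos _).le]
  ring

lemma pdf_cdf_integrable (a : ℝ) :
    Integrable (fun u : ℝ => stdNormalPDF u * stdNormalCDF (a * u)) := by
  apply pdf_integrable.mono'
  · exact (pdf_continuous.mul (cdf_continuous.comp (continuous_const.mul
      continuous_id))).aestronglyMeasurable
  · filter_upwards with u
    rw [Real.norm_eq_abs, abs_mul, abs_of_nonneg (pdf_pos u).le,
      abs_of_nonneg (cdf_nonneg _)]
    nlinarith [cdf_le_one (a*u), (pdf_pos u).le, cdf_nonneg (a*u)]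

lemma mul_pdf_cdf_integrable (a : ℝ) :
    Integrable (fun u : ℝ => u * stdNormalPDF u * stdNormalCDF (a * u)) := by
  apply abs_mul_pdf_integrable.mono'
  · exact ((continuous_id.mul pdf_continuous).mul (cdf_continuous.comp
      (continuous_const.mul continuous_id))).aestronglyMeasurable
  · filter_upwards with u
    rw [Real.norm_eq_abs, abs_mul, abs_mul, abs_of_nonneg (pdf_pos u).le,
      abs_of_nonneg (cdf_nonneg _)]
    nlinarith [cdf_le_one (a*u), (pdf_pos u).le, cdf_nonneg (a*u), abs_nonneg u,
      mul_nonneg (abs_nonneg u) (pdf_pos u).le]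

/-- Lemma B: `∫ φ(u) Φ(a u) du = 1/2`. -/
lemma lemB (a : ℝ) : ∫ u : ℝ, stdNormalPDF u * stdNormalCDF (a * u) = 1/2 := by
  set J := ∫ u : ℝ, stdNormalPDF u * stdNormalCDF (a * u) with hJ
  have h1 : J = ∫ u : ℝ, stdNormalPDF u * (1 - stdNormalCDF (a * u)) := by
    rw [hJ, ← integral_neg_eq_self (fun u : ℝ => stdNormalPDF u * stdNormalCDF (a * u))]
    congr 1; funext u
    rw [pdf_even, show a * -u = -(a*u) by ring, cdf_neg]
  have h2 : ∫ u : ℝ, stdNormalPDF u * (1 - stdNormalCDF (a * u)) = 1 - J := by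
    have : (fun u : ℝ => stdNormalPDF u * (1 - stdNormalCDF (a * u)))
        = fun u => stdNormalPDF u - stdNormalPDF u * stdNormalCDF (a * u) := by
      funext u; ring
    rw [this, integral_sub pdf_integrable (pdf_cdf_integrable a), pdf_integral, hJ]
  rw [h2] at h1; linarith

/-- Lemma A: `∫ u φ(u) Φ(a u) du = a / (√(1+a²) √(2π))`. -/
lemma lemA (a : ℝ) : ∫ u : ℝ, u * stdNormalPDF u * stdNormalCDF (a * u)
    = a / (Real.sqrt (1 + a^2) * Real.sqrt (2 * Real.pi)) := by
  set b := Real.sqrt (1 + a^2) with hb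
  have hb0 : 0 < b := Real.sqrt_pos.mpr (by positivity)
  have hb2 : b^2 = 1 + a^2 := Real.sq_sqrt (by positivity)
  set F : ℝ → ℝ := fun u => -stdNormalPDF u * stdNormalCDF (a * u)
    + (a / (b * Real.sqrt (2 * Real.pi))) * stdNormalCDF (b * u) with hF
  have hderiv : ∀ u, HasDerivAt F (u * stdNormalPDF u * stdNormalCDF (a * u)) u := by
    intro u
    have hφ : HasDerivAt stdNormalPDF (-u * stdNormalPDF u) u := by
      have h1 : HasDerivAt (fun x : ℝ => -x^2/2) (-u) u := by
        have := ((hasDerivAt_pow 2 u).neg).div_const 2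
        simpa using this.congr_deriv (by ring)
      have := (Real.hasDerivAt_exp (-u^2/2)).comp u h1
      have h2 := this.const_mul ((Real.sqrt (2 * Real.pi))⁻¹)
      apply h2.congr_deriv
      unfold stdNormalPDF; ring
    have hΦa : HasDerivAt (fun u => stdNormalCDF (a * u)) (a * stdNormalPDF (a * u)) u := by
      have h2 := HasDerivAt.comp u (cdf_hasDeriv (a * u)) ((hasDerivAt_id u).const_mul a)
      exact h2.congr_deriv (by ring)
    have hΦb : HasDerivAt (fun u => stdNormalCDF (b * u)) (b * stdNormalPDF (b * u)) u := by
      have h2 := HasDerivAt.comp u (cdf_hasDeriv (b * u)) ((hasDerivAt_id u).const_mul b)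
      exact h2.congr_deriv (by ring)
    have key : stdNormalPDF u * stdNormalPDF (a * u)
        = (Real.sqrt (2 * Real.pi))⁻¹ * stdNormalPDF (b * u) := by
      have he : Real.exp (-u^2/2) * Real.exp (-(a*u)^2/2) = Real.exp (-(b*u)^2/2) := by
        rw [← Real.exp_add]; congr 1; rw [mul_pow, mul_pow, hb2]; ring
      unfold stdNormalPDF
      rw [← he]; ring
    have H := ((hφ.neg.mul hΦa).add (hΦb.const_mul (a / (b * Real.sqrt (2 * Real.pi)))))
    apply H.congr_deriv
    have hbb : b⁻¹ * b = 1 := inv_mul_cancel₀ hb0.ne'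
    rw [show a / (b * Real.sqrt (2*Real.pi)) * (b * stdNormalPDF (b*u))
        = a * ((Real.sqrt (2*Real.pi))⁻¹ * stdNormalPDF (b * u)) * (b⁻¹ * b) by
      rw [div_eq_mul_inv, mul_inv]; ring]
    rw [hbb, ← key]; simp only [Pi.neg_apply]; ring
  have hbot : Tendsto F atBot (nhds 0) := by
    have t1 : Tendsto (fun u => -stdNormalPDF u * stdNormalCDF (a * u)) atBot (nhds 0) := by
      apply squeeze_zero_norm _ pdf_tendsto_bot
      intro u
      rw [Real.norm_eq_abs, abs_mul, abs_neg, abs_of_nonneg (pdf_pos u).le,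
        abs_of_nonneg (cdf_nonneg _)]
      nlinarith [cdf_le_one (a*u), (pdf_pos u).le, cdf_nonneg (a*u)]
    have t2 : Tendsto (fun u : ℝ => stdNormalCDF (b * u)) atBot (nhds 0) :=
      cdf_tendsto_bot.comp (tendsto_id.const_mul_atBot hb0)
    rw [show (0:ℝ) = 0 + (a / (b * Real.sqrt (2 * Real.pi))) * 0 by ring]
    exact t1.add (t2.const_mul _)
  have htop : Tendsto F atTop (nhds (a / (b * Real.sqrt (2 * Real.pi)))) := by
    have t1 : Tendsto (fun u => -stdNormalPDF u * stdNormalCDF (a * u)) atTop (nhds 0) := by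
      apply squeeze_zero_norm _ pdf_tendsto_top
      intro u
      rw [Real.norm_eq_abs, abs_mul, abs_neg, abs_of_nonneg (pdf_pos u).le,
        abs_of_nonneg (cdf_nonneg _)]
      nlinarith [cdf_le_one (a*u), (pdf_pos u).le, cdf_nonneg (a*u)]
    have t2 : Tendsto (fun u : ℝ => stdNormalCDF (b * u)) atTop (nhds 1) :=
      cdf_tendsto_top.comp (tendsto_id.const_mul_atTop hb0)
    rw [show a / (b * Real.sqrt (2 * Real.pi))
        = 0 + (a / (b * Real.sqrt (2 * Real.pi))) * 1 by ring]
    exact t1.add (t2.const_mul _)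
  have := integral_of_hasDerivAt_of_tendsto hderiv (mul_pdf_cdf_integrable a) hbot htop
  rw [this, sub_zero, mul_comm b]

/-- Standard bivariate normal density with correlation ρ. -/
noncomputable def biNormalPDF (ρ : ℝ) (p : ℝ × ℝ) : ℝ :=
  (2 * Real.pi * Real.sqrt (1 - ρ ^ 2))⁻¹ *
    Real.exp (-(p.1 ^ 2 - 2 * ρ * p.1 * p.2 + p.2 ^ 2) / (2 * (1 - ρ ^ 2)))

lemma part1 {c : ℝ} (hc : 0 < c) (sx : ℝ) (hsx : c * sx^2 < 1) :
    (sx / Real.sqrt (1 - c * sx^2)) / Real.sqrt (1 + c * (sx / Real.sqrt (1 - c * sx^2))^2)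
      = sx := by
  have hd : 0 < 1 - c * sx^2 := by linarith
  have hsd : 0 < Real.sqrt (1 - c * sx^2) := Real.sqrt_pos.mpr hd
  have h1 : (sx / Real.sqrt (1 - c * sx^2))^2 = sx^2 / (1 - c * sx^2) := by
    rw [div_pow, Real.sq_sqrt hd.le]
  have h2 : 1 + c * (sx^2 / (1 - c * sx^2)) = (1 - c * sx^2)⁻¹ := by
    field_simp; ring
  rw [h1, h2, Real.sqrt_inv]
  rw [div_eq_mul_inv _ ((Real.sqrt (1 - c * sx^2))⁻¹), inv_inv, div_mul_cancel₀ sx hsd.ne']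

lemma sqrt_two_div_pi : Real.sqrt (2 / Real.pi) = 2 / Real.sqrt (2 * Real.pi) := by
  rw [eq_div_iff (by positivity), ← Real.sqrt_mul (by positivity)]
  rw [show 2 / Real.pi * (2 * Real.pi) = 4 by field_simp; ring]
  rw [show (4:ℝ) = 2^2 by norm_num, Real.sqrt_sq (by norm_num)]

lemma inner_int (ρ : ℝ) (hρ : |ρ| < 1) (x t : ℝ) :
    ∫ y : ℝ, y * (2 * biNormalPDF ρ (x, y) * stdNormalCDF ((y - ρ * x) * t))
      = Real.sqrt (2/Real.pi) * (1-ρ^2) * (t / Real.sqrt (1 + (1-ρ^2)*t^2)) * stdNormalPDF x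
        + ρ * x * stdNormalPDF x := by
  have hρ2 := abs_lt.mp hρ
  have hc : 0 < 1 - ρ^2 := by nlinarith
  have hσ : 0 < Real.sqrt (1 - ρ^2) := Real.sqrt_pos.mpr hc
  set σ := Real.sqrt (1 - ρ^2) with hσdef
  have hσ2 : σ^2 = 1 - ρ^2 := Real.sq_sqrt hc.le
  set a := σ * t with hadef
  set f : ℝ → ℝ := fun y => y * (2 * biNormalPDF ρ (x, y) * stdNormalCDF ((y - ρ * x) * t))
    with hfdef
  have hfact : ∀ w : ℝ, biNormalPDF ρ (x, w + ρ*x)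
      = stdNormalPDF x * ((Real.sqrt (2*Real.pi*(1-ρ^2)))⁻¹ * Real.exp (-w^2/(2*(1-ρ^2)))) := by
    intro w
    unfold biNormalPDF stdNormalPDF
    simp only
    rw [show -(x ^ 2 - 2 * ρ * x * (w + ρ*x) + (w + ρ*x) ^ 2) / (2 * (1 - ρ ^ 2))
        = -x^2/2 + -w^2/(2*(1-ρ^2)) by field_simp; ring]
    rw [Real.exp_add]
    rw [show (2*Real.pi*Real.sqrt (1-ρ^2))⁻¹
        = (Real.sqrt (2*Real.pi))⁻¹ * (Real.sqrt (2*Real.pi*(1-ρ^2)))⁻¹ by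
      rw [← mul_inv]; congr 1
      rw [show 2*Real.pi*(1-ρ^2) = (2*Real.pi)*(1-ρ^2) by ring,
        Real.sqrt_mul (by positivity : (0:ℝ) ≤ 2*Real.pi) (1-ρ^2), ← mul_assoc,
        Real.mul_self_sqrt (by positivity)]]
    ring
  set g : ℝ → ℝ := fun w => (w + ρ*x) *
    (2 * (stdNormalPDF x * ((Real.sqrt (2*Real.pi*(1-ρ^2)))⁻¹ * Real.exp (-w^2/(2*(1-ρ^2)))))
      * stdNormalCDF (w * t)) with hgdef
  have step1 : ∫ y, f y = ∫ w, g w := by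
    rw [← integral_add_right_eq_self f (ρ*x)]
    congr 1; funext w
    rw [hfdef, hgdef]
    simp only
    rw [hfact w, show w + ρ*x - ρ*x = w by ring]
  have step2 : ∫ w, g w = σ * ∫ u, g (σ * u) := by
    have h := Measure.integral_comp_mul_left g σ
    rw [abs_of_pos (inv_pos.mpr hσ), smul_eq_mul] at h
    rw [h, ← mul_assoc, mul_inv_cancel₀ hσ.ne', one_mul]
  have hg : ∀ u : ℝ, σ * g (σ * u)
      = (2 * stdNormalPDF x * σ) * (u * stdNormalPDF u * stdNormalCDF (a * u))
        + (2 * stdNormalPDF x * (ρ*x)) * (stdNormalPDF u * stdNormalCDF (a * u)) := by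
    intro u
    rw [hgdef]; simp only
    rw [show σ * u * t = a * u by rw [hadef]; ring]
    rw [show -(σ*u)^2/(2*(1-ρ^2)) = -u^2/2 by rw [mul_pow, hσ2]; field_simp]
    have hk : σ * (Real.sqrt (2*Real.pi*(1-ρ^2)))⁻¹ = (Real.sqrt (2*Real.pi))⁻¹ := by
      rw [show 2*Real.pi*(1-ρ^2) = (2*Real.pi)*(1-ρ^2) by ring,
        Real.sqrt_mul (by positivity : (0:ℝ) ≤ 2*Real.pi) (1-ρ^2), mul_inv, ← hσdef]
      rw [mul_comm ((Real.sqrt (2*Real.pi))⁻¹), ← mul_assoc, mul_inv_cancel₀ hσ.ne', one_mul]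
    rw [show stdNormalPDF u = (Real.sqrt (2*Real.pi))⁻¹ * Real.exp (-u^2/2) from rfl]
    rw [← hk]
    ring
  have step3 : σ * ∫ u, g (σ * u)
      = (2 * stdNormalPDF x * σ) * (a / (Real.sqrt (1 + a^2) * Real.sqrt (2 * Real.pi)))
        + (2 * stdNormalPDF x * (ρ*x)) * (1/2) := by
    rw [← integral_const_mul]
    rw [show (fun u => σ * g (σ * u)) = fun u =>
      (2 * stdNormalPDF x * σ) * (u * stdNormalPDF u * stdNormalCDF (a * u))
        + (2 * stdNormalPDF x * (ρ*x)) * (stdNormalPDF u * stdNormalCDF (a * u))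
      from funext hg]
    rw [integral_add ((mul_pdf_cdf_integrable a).const_mul _)
      ((pdf_cdf_integrable a).const_mul _)]
    rw [integral_const_mul, integral_const_mul, lemA, lemB]
  rw [step1, step2, step3]
  have ha2 : 1 + a^2 = 1 + (1-ρ^2)*t^2 := by rw [hadef, mul_pow, hσ2]
  have hσa : σ * a = (1-ρ^2) * t := by rw [hadef, ← mul_assoc, ← pow_two, hσ2]
  rw [ha2]
  rw [sqrt_two_div_pi]
  have hb : 0 < Real.sqrt (1 + (1-ρ^2)*t^2) := Real.sqrt_pos.mpr (by positivity)
  field_simp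
  linear_combination (2 * stdNormalPDF x * t) * hσ2

lemma xpdf_integrable : Integrable (fun x : ℝ => x * stdNormalPDF x) := by
  have h : Integrable (fun u : ℝ => u * Real.exp (-(1/2)*u^2)) :=
    integrable_mul_exp_neg_mul_sq (by norm_num)
  apply (h.const_mul ((Real.sqrt (2*Real.pi))⁻¹)).congr
  filter_upwards with u
  rw [pdf_eq]; ring

lemma pdf_hasDeriv (u : ℝ) : HasDerivAt stdNormalPDF (-u * stdNormalPDF u) u := by
  have h1 : HasDerivAt (fun x : ℝ => -x^2/2) (-u) u := by
    have := ((hasDerivAt_pow 2 u).neg).div_const 2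
    simpa using this.congr_deriv (by ring)
  have := (Real.hasDerivAt_exp (-u^2/2)).comp u h1
  have h2 := this.const_mul ((Real.sqrt (2 * Real.pi))⁻¹)
  apply h2.congr_deriv
  unfold stdNormalPDF; ring

lemma xpdf_integral : ∫ x : ℝ, x * stdNormalPDF x = 0 := by
  have hderiv : ∀ u : ℝ, HasDerivAt (fun x => -stdNormalPDF x) (u * stdNormalPDF u) u :=
    fun u => ((pdf_hasDeriv u).neg).congr_deriv (by ring)
  have := integral_of_hasDerivAt_of_tendsto hderiv xpdf_integrable
    pdf_tendsto_bot.neg pdf_tendsto_top.neg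
  simpa using this

theorem stmt12 (ρ : ℝ) (hρ : |ρ| < 1) (s : ℝ → ℝ) (hs : Measurable s)
    (hsbound : ∀ x, (1 - ρ ^ 2) * s x ^ 2 < 1)
    (S : ℝ) (hS : ∫ x, s x * stdNormalPDF x = S)
    (h : ℝ → ℝ) (hdef : ∀ x, h x = s x / Real.sqrt (1 - (1 - ρ ^ 2) * s x ^ 2))
    (hint : Integrable (fun p : ℝ × ℝ =>
      p.2 * (2 * biNormalPDF ρ p * stdNormalCDF ((p.2 - ρ * p.1) * h p.1)))) :
    (∀ x, h x / Real.sqrt (1 + (1 - ρ ^ 2) * h x ^ 2) = s x) ∧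
    ∫ p : ℝ × ℝ, p.2 * (2 * biNormalPDF ρ p * stdNormalCDF ((p.2 - ρ * p.1) * h p.1))
      = Real.sqrt (2 / Real.pi) * (1 - ρ ^ 2) * S := by
  have hρ2 := abs_lt.mp hρ
  have hc : 0 < 1 - ρ^2 := by nlinarith
  have hpart1 : ∀ x, h x / Real.sqrt (1 + (1 - ρ ^ 2) * h x ^ 2) = s x := by
    intro x; rw [hdef x]; exact part1 hc (s x) (hsbound x)
  refine ⟨hpart1, ?_⟩
  set f : ℝ × ℝ → ℝ := fun p =>
    p.2 * (2 * biNormalPDF ρ p * stdNormalCDF ((p.2 - ρ * p.1) * h p.1)) with hfdef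
  have hint2 : Integrable f (Measure.prod volume volume) := by
    rwa [← Measure.volume_eq_prod]
  rw [Measure.volume_eq_prod, integral_prod f hint2]
  have hinner : ∀ x, (∫ y, f (x, y))
      = (Real.sqrt (2/Real.pi) * (1-ρ^2)) * (s x * stdNormalPDF x)
        + ρ * (x * stdNormalPDF x) := by
    intro x
    have he : (∫ y, f (x, y))
        = ∫ y, y * (2 * biNormalPDF ρ (x, y) * stdNormalCDF ((y - ρ * x) * h x)) := rfl
    rw [he, inner_int ρ hρ x (h x), hpart1 x]
    ring
  have hIeq : (fun x => ∫ y, f (x, y))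
      = fun x => (Real.sqrt (2/Real.pi) * (1-ρ^2)) * (s x * stdNormalPDF x)
        + ρ * (x * stdNormalPDF x) := funext hinner
  have hI : Integrable (fun x => ∫ y, f (x, y)) := hint2.integral_prod_left
  rw [hIeq] at hI
  have hT := xpdf_integrable
  have hApos : 0 < Real.sqrt (2/Real.pi) * (1-ρ^2) :=
    mul_pos (Real.sqrt_pos.mpr (by positivity)) hc
  have h5 : Integrable (fun x =>
      (Real.sqrt (2/Real.pi) * (1-ρ^2)) * (s x * stdNormalPDF x)) := by
    apply (hI.sub (hT.const_mul ρ)).congr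
    filter_upwards with x
    simp only [Pi.sub_apply]; ring
  have hsφ : Integrable (fun x => s x * stdNormalPDF x) := by
    apply (h5.const_mul (Real.sqrt (2/Real.pi) * (1-ρ^2))⁻¹).congr
    filter_upwards with x
    rw [← mul_assoc, inv_mul_cancel₀ hApos.ne', one_mul]
  rw [hIeq, integral_add h5 (hT.const_mul ρ), integral_const_mul, integral_const_mul,
    hS, xpdf_integral]
  ring
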